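/- Let G be obtained from a graph H by multiplying a set X ⊆ V(H). If the subgraph of H induced by X is isomorphic to an induced subgraph of the 4-cycle C_4, and no two non-adjacent vertices of X have a common neighbour in V(H) \ X, then every hitting set of the triangles of H that is disjoint from X is also a hitting set of the triangles of G. -/

import Mathlib

/-- The 4-cycle C₄ on the vertices of ZMod 4. -/
def CycleFour : SimpleGraph (ZMod 4) := SimpleGraph.fromRel (fun u v => v = u + 1)

lemma cycleFour_three (a b c : ZMod 4) (hab : a ≠ b) (hac : a ≠ c) (hbc : b ≠ c) :
    (CycleFour.Adj a b ∧ CycleFour.Adj a c ∧ ¬ CycleFour.Adj b c) ∨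
    (CycleFour.Adj a b ∧ ¬ CycleFour.Adj a c ∧ CycleFour.Adj b c) ∨
    (¬ CycleFour.Adj a b ∧ CycleFour.Adj a c ∧ CycleFour.Adj b c) := by
  revert hab hac hbc; revert a b c
  simp only [CycleFour, SimpleGraph.fromRel_adj]
  decide

/-- Multiplication lemma: let G be obtained from H by multiplying X (encoded by the
projection π : W → V, where the fibre of π over x ∈ X is the set A_x of new vertices,
the fibre over any v ∉ X is a single vertex, and φ is the corresponding integer map,
injective on every fibre).  If H[X] is an induced subgraph of C₄ and no two distinct
non-adjacent vertices of X have a common neighbour outside X, then any hitting set S of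
the triangles of H disjoint from X is also a hitting set of the triangles of G. -/
theorem multiplication_preserves_hitting_set {V W : Type*}
    (H : SimpleGraph V) (X : Set V)
    (G : SimpleGraph W) (π : W → V) (φ : W → ℤ)
    (hπ : ∀ v : V, v ∉ X → ∃! w : W, π w = v)
    (hφ : ∀ w w' : W, π w = π w' → φ w = φ w' → w = w')
    (hadj₁ : ∀ w w' : W, (π w ∉ X ∨ π w' ∉ X) →
      (G.Adj w w' ↔ H.Adj (π w) (π w')))
    (hadj₂ : ∀ w w' : W, π w ∈ X → π w' ∈ X →
      (G.Adj w w' ↔ (π w ≠ π w' ∧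
        ((H.Adj (π w) (π w') ∧ φ w = φ w') ∨
         (¬ H.Adj (π w) (π w') ∧ φ w ≠ φ w')))))
    (hC4 : ∃ g : V → ZMod 4, Set.InjOn g X ∧
      ∀ x ∈ X, ∀ y ∈ X, (H.Adj x y ↔ CycleFour.Adj (g x) (g y)))
    (hcn : ∀ x ∈ X, ∀ y ∈ X, x ≠ y → ¬ H.Adj x y →
      ∀ v : V, v ∉ X → ¬ (H.Adj v x ∧ H.Adj v y))
    (S : Set V)
    (hS : ∀ a b c : V, H.Adj a b → H.Adj a c → H.Adj b c → (a ∈ S ∨ b ∈ S ∨ c ∈ S))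
    (hSX : ∀ v ∈ S, v ∉ X) :
    ∀ p q r : W, G.Adj p q → G.Adj p r → G.Adj q r →
      (π p ∈ S ∨ π q ∈ S ∨ π r ∈ S) := by
  -- adjacent vertices have distinct projections
  have hne : ∀ w w' : W, G.Adj w w' → π w ≠ π w' := by
    intro w w' hww heq
    by_cases hx : π w ∈ X
    · exact ((hadj₂ w w' hx (heq ▸ hx)).1 hww).1 heq
    · obtain ⟨u, -, hu⟩ := hπ (π w) hx
      exact G.loopless.irrefl w' (((hu w rfl).trans (hu w' heq.symm).symm : w = w') ▸ hww)
  intro p q r hpq hpr hqr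
  by_cases hp : π p ∈ X <;> by_cases hq : π q ∈ X <;> by_cases hr : π r ∈ X
  · -- all three in X
    exfalso
    obtain ⟨g, hginj, hg⟩ := hC4
    have h1 := (hadj₂ p q hp hq).1 hpq
    have h2 := (hadj₂ p r hp hr).1 hpr
    have h3 := (hadj₂ q r hq hr).1 hqr
    have gpq : g (π p) ≠ g (π q) := fun e => h1.1 (hginj hp hq e)
    have gpr : g (π p) ≠ g (π r) := fun e => h2.1 (hginj hp hr e)
    have gqr : g (π q) ≠ g (π r) := fun e => h3.1 (hginj hq hr e)
    have key : ∀ w w' : W, π w ∈ X → π w' ∈ X →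
        (π w ≠ π w' ∧ ((H.Adj (π w) (π w') ∧ φ w = φ w') ∨
          (¬ H.Adj (π w) (π w') ∧ φ w ≠ φ w'))) →
        (CycleFour.Adj (g (π w)) (g (π w')) → φ w = φ w') ∧
        (¬ CycleFour.Adj (g (π w)) (g (π w')) → φ w ≠ φ w') := by
      intro w w' hw hw' ⟨_, hd⟩
      constructor
      · intro hc
        rcases hd with ⟨_, he⟩ | ⟨hna, _⟩
        · exact he
        · exact absurd ((hg _ hw _ hw').2 hc) hna
      · intro hc
        rcases hd with ⟨ha, _⟩ | ⟨_, he⟩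
        · exact absurd ((hg _ hw _ hw').1 ha) hc
        · exact he
    have k1 := key p q hp hq h1
    have k2 := key p r hp hr h2
    have k3 := key q r hq hr h3
    rcases cycleFour_three _ _ _ gpq gpr gqr with ⟨a1, a2, a3⟩ | ⟨a1, a2, a3⟩ | ⟨a1, a2, a3⟩
    · exact k3.2 a3 ((k1.1 a1).symm.trans (k2.1 a2))
    · exact k2.2 a2 ((k1.1 a1).trans (k3.1 a3))
    · exact k1.2 a1 ((k2.1 a2).trans (k3.1 a3).symm)
  · -- p,q ∈ X, r ∉ X
    have h2 := (hadj₁ p r (Or.inr hr)).1 hpr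
    have h3 := (hadj₁ q r (Or.inr hr)).1 hqr
    by_cases h1 : H.Adj (π p) (π q)
    · exact hS _ _ _ h1 h2 h3
    · exact absurd ⟨h2.symm, h3.symm⟩ (hcn _ hp _ hq (hne p q hpq) h1 _ hr)
  · -- p,r ∈ X, q ∉ X
    have h1 := (hadj₁ p q (Or.inr hq)).1 hpq
    have h3 := (hadj₁ q r (Or.inl hq)).1 hqr
    by_cases h2 : H.Adj (π p) (π r)
    · exact hS _ _ _ h1 h2 h3
    · exact absurd ⟨h1.symm, h3⟩ (hcn _ hp _ hr (hne p r hpr) h2 _ hq)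
  · exact hS _ _ _ ((hadj₁ p q (Or.inr hq)).1 hpq) ((hadj₁ p r (Or.inr hr)).1 hpr)
      ((hadj₁ q r (Or.inl hq)).1 hqr)
  · -- q,r ∈ X, p ∉ X
    have h1 := (hadj₁ p q (Or.inl hp)).1 hpq
    have h2 := (hadj₁ p r (Or.inl hp)).1 hpr
    by_cases h3 : H.Adj (π q) (π r)
    · exact hS _ _ _ h1 h2 h3
    · exact absurd ⟨h1, h2⟩ (hcn _ hq _ hr (hne q r hqr) h3 _ hp)
  · exact hS _ _ _ ((hadj₁ p q (Or.inl hp)).1 hpq) ((hadj₁ p r (Or.inl hp)).1 hpr)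
      ((hadj₁ q r (Or.inr hr)).1 hqr)
  · exact hS _ _ _ ((hadj₁ p q (Or.inl hp)).1 hpq) ((hadj₁ p r (Or.inl hp)).1 hpr)
      ((hadj₁ q r (Or.inl hq)).1 hqr)
  · exact hS _ _ _ ((hadj₁ p q (Or.inl hp)).1 hpq) ((hadj₁ p r (Or.inl hp)).1 hpr)
      ((hadj₁ q r (Or.inl hq)).1 hqr)
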